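/- arXiv:2507.00060 — 2 statements merged into one kernel-verified Lean document; each statement's English description precedes it below -/
import Mathlib

section
/- A net (A_i) of star bodies in ℝ^d converges to a star body A in the radial Wijsman topology (i.e. d_r(x,A_i) → d_r(x,A) for every x ∈ ℝ^d) if and only if the radial functions ρ_{A_i} converge pointwise on S^{d-1} to ρ_A (in [0,∞]). -/
open scoped ENNReal

noncomputable section

/-- Radial function of a set `A ⊆ ℝ^d` in direction `θ`. -/
def radialFn {d : ℕ} (A : Set (EuclideanSpace ℝ (Fin d)))
    (θ : EuclideanSpace ℝ (Fin d)) : ℝ≥0∞ :=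
  sSup (ENNReal.ofReal '' {r : ℝ | 0 ≤ r ∧ r • θ ∈ A})

/-- A star set: nonempty and closed under scaling by `t ∈ [0,1]`. -/
def IsStarSet {d : ℕ} (A : Set (EuclideanSpace ℝ (Fin d))) : Prop :=
  A.Nonempty ∧ ∀ a ∈ A, ∀ t : ℝ, 0 ≤ t → t ≤ 1 → t • a ∈ A

/-- A star body: a radially closed star set. -/
def IsStarBody {d : ℕ} (A : Set (EuclideanSpace ℝ (Fin d))) : Prop :=
  IsStarSet A ∧ ∀ θ : EuclideanSpace ℝ (Fin d), ‖θ‖ = 1 → radialFn A θ ≠ ⊤ →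
    (radialFn A θ).toReal • θ ∈ A

open scoped Classical in
/-- The radial distance from a point `x` to a star body `A`:
`0` if `x ∈ A`, and `‖x‖ - ρ_A(x/‖x‖)` otherwise. -/
def radialDist {d : ℕ} (x : EuclideanSpace ℝ (Fin d))
    (A : Set (EuclideanSpace ℝ (Fin d))) : ℝ :=
  if x ∈ A then 0 else ‖x‖ - (radialFn A (‖x‖⁻¹ • x)).toReal

lemma IsStarSet.zero_mem {d : ℕ} {A : Set (EuclideanSpace ℝ (Fin d))}
    (h : IsStarSet A) : (0 : EuclideanSpace ℝ (Fin d)) ∈ A := by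
  obtain ⟨⟨a, ha⟩, hs⟩ := h
  simpa using hs a ha 0 le_rfl zero_le_one

lemma IsStarSet.smul_mem_of_le {d : ℕ} {A : Set (EuclideanSpace ℝ (Fin d))}
    (h : IsStarSet A) {θ : EuclideanSpace ℝ (Fin d)} {s r : ℝ}
    (hs : 0 ≤ s) (hsr : s ≤ r) (hr : r • θ ∈ A) : s • θ ∈ A := by
  rcases eq_or_lt_of_le (hs.trans hsr) with h0 | h0
  · have hs0 : s = 0 := le_antisymm (hsr.trans h0.symm.le) hs
    simpa [hs0] using h.zero_mem
  · have := h.2 _ hr (s / r) (div_nonneg hs h0.le) ((div_le_one h0).2 hsr)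
    rwa [smul_smul, div_mul_cancel₀ _ h0.ne'] at this

lemma smul_mem_iff_le_radialFn {d : ℕ} {A : Set (EuclideanSpace ℝ (Fin d))}
    (hA : IsStarBody A) {θ : EuclideanSpace ℝ (Fin d)} (hθ : ‖θ‖ = 1)
    {s : ℝ} (hs : 0 ≤ s) : s • θ ∈ A ↔ ENNReal.ofReal s ≤ radialFn A θ := by
  constructor
  · intro hmem
    exact le_sSup ⟨s, ⟨hs, hmem⟩, rfl⟩
  · intro hle
    by_cases htop : radialFn A θ = ⊤
    · have hlt : ENNReal.ofReal s < sSup (ENNReal.ofReal '' {r : ℝ | 0 ≤ r ∧ r • θ ∈ A}) := by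
        rw [show sSup (ENNReal.ofReal '' {r : ℝ | 0 ≤ r ∧ r • θ ∈ A}) = radialFn A θ from rfl,
          htop]
        exact ENNReal.ofReal_lt_top
      obtain ⟨b, ⟨r, ⟨hr0, hrmem⟩, rfl⟩, hb⟩ := lt_sSup_iff.mp hlt
      have hsr : s ≤ r := by
        by_contra hcon
        exact absurd (ENNReal.ofReal_le_ofReal (le_of_not_ge hcon)) (not_le.mpr hb)
      exact hA.1.smul_mem_of_le hs hsr hrmem
    · have hmem := hA.2 θ hθ htop
      have hsr : s ≤ (radialFn A θ).toReal := by
        rw [← ENNReal.ofReal_le_iff_le_toReal htop]; exact hle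
      exact hA.1.smul_mem_of_le hs hsr hmem

lemma radialDist_eq {d : ℕ} {A : Set (EuclideanSpace ℝ (Fin d))} (hA : IsStarBody A)
    (x : EuclideanSpace ℝ (Fin d)) :
    radialDist x A = (ENNReal.ofReal ‖x‖ - radialFn A (‖x‖⁻¹ • x)).toReal := by
  by_cases hx : x = (0 : EuclideanSpace ℝ (Fin d))
  · subst hx
    simp [radialDist, hA.1.zero_mem, zero_tsub]
  · have hxn : (0:ℝ) < ‖x‖ := norm_pos_iff.mpr hx
    set θ := ‖x‖⁻¹ • x with hθdef
    have hθ : ‖θ‖ = 1 := by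
      rw [hθdef, norm_smul, norm_inv, norm_norm, inv_mul_cancel₀ hxn.ne']
    have hxθ : ‖x‖ • θ = x := by
      rw [hθdef, smul_inv_smul₀ hxn.ne']
    have hmem : x ∈ A ↔ ENNReal.ofReal ‖x‖ ≤ radialFn A θ := by
      have := smul_mem_iff_le_radialFn hA hθ hxn.le
      rwa [hxθ] at this
    by_cases hxA : x ∈ A
    · rw [radialDist, if_pos hxA, tsub_eq_zero_of_le (hmem.mp hxA), ENNReal.toReal_zero]
    · have hlt : radialFn A θ < ENNReal.ofReal ‖x‖ := not_le.mp (fun h => hxA (hmem.mpr h))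
      rw [radialDist, if_neg hxA,
        ENNReal.toReal_sub_of_le hlt.le ENNReal.ofReal_ne_top,
        ENNReal.toReal_ofReal hxn.le]

theorem radialWijsman_iff_pointwise_radialFn {d : ℕ} {ι : Type*} (l : Filter ι)
    [l.NeBot] (A : ι → Set (EuclideanSpace ℝ (Fin d)))
    (B : Set (EuclideanSpace ℝ (Fin d)))
    (hA : ∀ i, IsStarBody (A i)) (hB : IsStarBody B) :
    (∀ x : EuclideanSpace ℝ (Fin d),
        Filter.Tendsto (fun i => radialDist x (A i)) l (nhds (radialDist x B))) ↔
      (∀ θ : EuclideanSpace ℝ (Fin d), ‖θ‖ = 1 →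
        Filter.Tendsto (fun i => radialFn (A i) θ) l (nhds (radialFn B θ))) := by
  constructor
  · intro h θ hθ
    -- key: for every s > 0, the truncated differences converge
    have key : ∀ s : ℝ, 0 < s →
        Filter.Tendsto (fun i => (ENNReal.ofReal s - radialFn (A i) θ).toReal) l
          (nhds ((ENNReal.ofReal s - radialFn B θ).toReal)) := by
      intro s hs
      have hns : ‖s • θ‖ = s := by
        rw [norm_smul, hθ, Real.norm_eq_abs, abs_of_pos hs, mul_one]
      have hdir : s⁻¹ • s • θ = θ := inv_smul_smul₀ hs.ne' θ
      have := h (s • θ)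
      simp only [radialDist_eq (hA _), radialDist_eq hB, hns, hdir] at this
      exact this
    by_cases htop : radialFn B θ = ⊤
    · rw [htop]
      rw [ENNReal.tendsto_nhds_top_iff_nat]
      intro n
      have hs : (0:ℝ) < (n:ℝ) + 2 := by positivity
      have hc : Filter.Tendsto (fun i => (ENNReal.ofReal ((n:ℝ)+2) - radialFn (A i) θ).toReal)
          l (nhds 0) := by
        have := key _ hs
        rwa [htop, ENNReal.sub_top, ENNReal.toReal_zero] at this
      filter_upwards [hc.eventually (eventually_lt_nhds zero_lt_one)] with i hi
      by_contra hcon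
      push_neg at hcon
      have hle : radialFn (A i) θ ≤ ENNReal.ofReal ((n:ℝ)+2) := by
        refine hcon.trans ?_
        rw [← ENNReal.ofReal_natCast n]
        exact ENNReal.ofReal_le_ofReal (by linarith)
      have hne : radialFn (A i) θ ≠ ⊤ := ne_top_of_le_ne_top ENNReal.ofReal_ne_top hle
      rw [ENNReal.toReal_sub_of_le hle ENNReal.ofReal_ne_top,
        ENNReal.toReal_ofReal hs.le] at hi
      have htr : (radialFn (A i) θ).toReal ≤ (n:ℝ) := by
        have := ENNReal.toReal_le_toReal hne (ENNReal.natCast_ne_top n) |>.mpr hcon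
        simpa using this
      linarith
    · set t := (radialFn B θ).toReal with ht
      have hρ : radialFn B θ = ENNReal.ofReal t := (ENNReal.ofReal_toReal htop).symm
      have hs : (0:ℝ) < t + 1 := by positivity
      have hle : radialFn B θ ≤ ENNReal.ofReal (t + 1) := by
        rw [hρ]; exact ENNReal.ofReal_le_ofReal (by linarith)
      have hc : Filter.Tendsto (fun i => (ENNReal.ofReal (t+1) - radialFn (A i) θ).toReal)
          l (nhds 1) := by
        have := key _ hs
        rwa [ENNReal.toReal_sub_of_le hle ENNReal.ofReal_ne_top,
          ENNReal.toReal_ofReal hs.le, ← ht, add_sub_cancel_left] at this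
      have hofReal : Filter.Tendsto
          (fun i => ENNReal.ofReal ((t+1) - (ENNReal.ofReal (t+1) - radialFn (A i) θ).toReal))
          l (nhds (radialFn B θ)) := by
        have h1 : Filter.Tendsto
            (fun i => (t+1) - (ENNReal.ofReal (t+1) - radialFn (A i) θ).toReal) l
            (nhds t) := by
          have := hc.const_sub (t+1)
          simpa using this
        have := ENNReal.continuous_ofReal.continuousAt.tendsto.comp h1
        rwa [← hρ] at this
      refine hofReal.congr' ?_
      filter_upwards [hc.eventually (eventually_gt_nhds zero_lt_one)] with i hi
      have hne0 : ENNReal.ofReal (t+1) - radialFn (A i) θ ≠ 0 := by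
        intro h0
        rw [h0, ENNReal.toReal_zero] at hi
        exact lt_irrefl _ hi
      have hlt : radialFn (A i) θ < ENNReal.ofReal (t+1) := by
        by_contra hcon
        exact hne0 (tsub_eq_zero_of_le (not_lt.mp hcon))
      have hne : radialFn (A i) θ ≠ ⊤ := ne_top_of_lt hlt
      rw [ENNReal.toReal_sub_of_le hlt.le ENNReal.ofReal_ne_top,
        ENNReal.toReal_ofReal hs.le, sub_sub_cancel, ENNReal.ofReal_toReal hne]
  · intro h x
    by_cases hx : x = (0 : EuclideanSpace ℝ (Fin d))
    · subst hx
      simp only [radialDist_eq (hA _), radialDist_eq hB, norm_zero, ENNReal.ofReal_zero,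
        zero_tsub, ENNReal.toReal_zero]
      exact tendsto_const_nhds
    · have hxn : (0:ℝ) < ‖x‖ := norm_pos_iff.mpr hx
      set θ := ‖x‖⁻¹ • x with hθdef
      have hθ : ‖θ‖ = 1 := by
        rw [hθdef, norm_smul, norm_inv, norm_norm, inv_mul_cancel₀ hxn.ne']
      have hsub : Filter.Tendsto (fun i => ENNReal.ofReal ‖x‖ - radialFn (A i) θ) l
          (nhds (ENNReal.ofReal ‖x‖ - radialFn B θ)) :=
        ((ENNReal.continuous_sub_left ENNReal.ofReal_ne_top).continuousAt.tendsto).comp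
          (h θ hθ)
      have hne : ENNReal.ofReal ‖x‖ - radialFn B θ ≠ ⊤ :=
        ne_top_of_le_ne_top ENNReal.ofReal_ne_top tsub_le_self
      have := (ENNReal.tendsto_toReal hne).comp hsub
      simpa only [radialDist_eq (hA _), radialDist_eq hB, Function.comp_def] using this
end
end

section
/- The radial Attouch–Wets distance d_{AW^r}(A₁,A₂) := sup_{j∈ℕ} min{1/j, sup_{‖x‖≤j} |d_r(x,A₁) − d_r(x,A₂)|} is a metric on the family of star bodies in ℝ^d, and the resulting metric space is complete. -/
open scoped ENNReal

noncomputable section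

/-- The radial Attouch–Wets distance between star bodies. -/
def dAWr {d : ℕ} (A₁ A₂ : Set (EuclideanSpace ℝ (Fin d))) : ℝ :=
  ⨆ j : ℕ, min (1 / ((j : ℝ) + 1))
    (⨆ x : Metric.closedBall (0 : EuclideanSpace ℝ (Fin d)) ((j : ℝ) + 1),
      |radialDist (x : EuclideanSpace ℝ (Fin d)) A₁ -
        radialDist (x : EuclideanSpace ℝ (Fin d)) A₂|)


section Aux

open Filter Metric

variable {d : ℕ}

theorem starSet_zero_mem {A : Set (EuclideanSpace ℝ (Fin d))} (hA : IsStarSet A) :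
    (0 : EuclideanSpace ℝ (Fin d)) ∈ A := by
  obtain ⟨⟨a, ha⟩, hs⟩ := hA
  simpa using hs a ha 0 le_rfl zero_le_one

theorem starSet_smul_mem {A : Set (EuclideanSpace ℝ (Fin d))} (hA : IsStarSet A)
    {θ : EuclideanSpace ℝ (Fin d)} {s t : ℝ}
    (hs : s • θ ∈ A) (ht0 : 0 ≤ t) (hts : t ≤ s) : t • θ ∈ A := by
  rcases eq_or_lt_of_le (ht0.trans hts) with h | h
  · have ht : t = 0 := le_antisymm (hts.trans h.symm.le) ht0
    rw [ht, zero_smul]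
    exact starSet_zero_mem ⟨⟨_, hs⟩, hA.2⟩
  · have := hA.2 _ hs (t / s) (div_nonneg ht0 h.le) (div_le_one_of_le₀ hts h.le)
    rwa [smul_smul, div_mul_cancel₀ _ h.ne'] at this

theorem le_radialFn_of_mem {A : Set (EuclideanSpace ℝ (Fin d))}
    {θ : EuclideanSpace ℝ (Fin d)} {r : ℝ} (hr : 0 ≤ r) (h : r • θ ∈ A) :
    ENNReal.ofReal r ≤ radialFn A θ :=
  le_sSup ⟨r, ⟨hr, h⟩, rfl⟩

theorem mem_of_le_radialFn {A : Set (EuclideanSpace ℝ (Fin d))} (hA : IsStarBody A)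
    {θ : EuclideanSpace ℝ (Fin d)} (hθ : ‖θ‖ = 1) {r : ℝ} (hr : 0 ≤ r)
    (h : ENNReal.ofReal r ≤ radialFn A θ) : r • θ ∈ A := by
  by_cases htop : radialFn A θ = ⊤
  · by_contra hmem
    have hb : ∀ s ∈ {r : ℝ | 0 ≤ r ∧ r • θ ∈ A}, s ≤ r := by
      intro s hs
      by_contra hsr
      exact hmem (starSet_smul_mem hA.1 hs.2 hr (not_le.1 hsr).le)
    have : radialFn A θ ≤ ENNReal.ofReal r := by
      refine sSup_le ?_
      rintro y ⟨s, hs, rfl⟩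
      exact ENNReal.ofReal_le_ofReal (hb s hs)
    rw [htop, top_le_iff] at this
    exact ENNReal.ofReal_ne_top this
  · have hmem := hA.2 θ hθ htop
    have hle : r ≤ (radialFn A θ).toReal :=
      (ENNReal.ofReal_le_iff_le_toReal htop).1 h
    exact starSet_smul_mem hA.1 hmem hr hle

theorem radialDist_zero (A : Set (EuclideanSpace ℝ (Fin d))) (hA : IsStarSet A) :
    radialDist (0 : EuclideanSpace ℝ (Fin d)) A = 0 := by
  rw [radialDist, if_pos (starSet_zero_mem hA)]

/-- An auxiliary scalar function: `Dfun h r = r - min(h, r)`. -/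
noncomputable def Dfun (h : ℝ≥0∞) (r : ℝ) : ℝ := r - (min h (ENNReal.ofReal r)).toReal

theorem Dfun_top {r : ℝ} (hr : 0 ≤ r) : Dfun ⊤ r = 0 := by
  rw [Dfun, min_eq_right le_top, ENNReal.toReal_ofReal hr, sub_self]

theorem Dfun_eq {h : ℝ≥0∞} (hh : h ≠ ⊤) {r : ℝ} (hr : 0 ≤ r) :
    Dfun h r = max (r - h.toReal) 0 := by
  rw [Dfun, ENNReal.toReal_min hh ENNReal.ofReal_ne_top, ENNReal.toReal_ofReal hr]
  rcases le_total h.toReal r with hc | hc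
  · rw [min_eq_left hc, max_eq_left (by linarith)]
  · rw [min_eq_right hc, max_eq_right (by linarith), sub_self]

theorem Dfun_nonneg (h : ℝ≥0∞) {r : ℝ} (hr : 0 ≤ r) : 0 ≤ Dfun h r := by
  by_cases hh : h = ⊤
  · rw [hh, Dfun_top hr]
  · rw [Dfun_eq hh hr]; exact le_max_right _ _

theorem Dfun_mono (h : ℝ≥0∞) {r s : ℝ} (hr : 0 ≤ r) (hrs : r ≤ s) :
    Dfun h r ≤ Dfun h s := by
  by_cases hh : h = ⊤
  · rw [hh, Dfun_top hr, Dfun_top (hr.trans hrs)]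
  · rw [Dfun_eq hh hr, Dfun_eq hh (hr.trans hrs)]
    exact max_le_max (by linarith) le_rfl

theorem Dfun_lip (h : ℝ≥0∞) {r s : ℝ} (hr : 0 ≤ r) (hs : 0 ≤ s) :
    |Dfun h r - Dfun h s| ≤ |r - s| := by
  by_cases hh : h = ⊤
  · rw [hh, Dfun_top hr, Dfun_top hs, sub_self, abs_zero]
    exact abs_nonneg _
  · rw [Dfun_eq hh hr, Dfun_eq hh hs]
    calc |max (r - h.toReal) 0 - max (s - h.toReal) 0| ≤ |(r - h.toReal) - (s - h.toReal)| :=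
          abs_max_sub_max_le_abs _ _ _
      _ = |r - s| := by ring_nf

theorem Dfun_key (h : ℝ≥0∞) {r s : ℝ} (hs : 0 ≤ s) (hsr : s ≤ r) (hpos : 0 < Dfun h s) :
    Dfun h r = Dfun h s + (r - s) := by
  by_cases hh : h = ⊤
  · rw [hh, Dfun_top hs] at hpos; exact absurd hpos (lt_irrefl 0)
  · rw [Dfun_eq hh hs] at hpos ⊢
    rw [Dfun_eq hh (hs.trans hsr)]
    have h1 : 0 < s - h.toReal := by
      by_contra hc
      rw [max_eq_right (not_lt.1 hc)] at hpos
      exact lt_irrefl _ hpos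
    rw [max_eq_left h1.le, max_eq_left (by linarith)]
    ring

end Aux
section Aux2

open Filter Metric

variable {d : ℕ}

theorem norm_unit_smul {θ : EuclideanSpace ℝ (Fin d)} (hθ : ‖θ‖ = 1) {r : ℝ} (hr : 0 ≤ r) :
    ‖r • θ‖ = r := by
  rw [norm_smul, hθ, mul_one, Real.norm_eq_abs, abs_of_nonneg hr]

theorem radialDist_smul {A : Set (EuclideanSpace ℝ (Fin d))} (hA : IsStarBody A)
    {θ : EuclideanSpace ℝ (Fin d)} (hθ : ‖θ‖ = 1) {r : ℝ} (hr : 0 ≤ r) :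
    radialDist (r • θ) A = Dfun (radialFn A θ) r := by
  rcases eq_or_lt_of_le hr with rfl | hr'
  · rw [zero_smul, radialDist_zero _ hA.1, Dfun, ENNReal.ofReal_zero,
      min_eq_right zero_le, ENNReal.toReal_zero, sub_self]
  · have hnorm : ‖r • θ‖ = r := norm_unit_smul hθ hr
    have hdir : ‖r • θ‖⁻¹ • (r • θ) = θ := by
      rw [hnorm, smul_smul, inv_mul_cancel₀ hr'.ne', one_smul]
    by_cases hmem : r • θ ∈ A
    · rw [radialDist, if_pos hmem, Dfun,
        min_eq_right (le_radialFn_of_mem hr hmem), ENNReal.toReal_ofReal hr, sub_self]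
    · have hlt : radialFn A θ < ENNReal.ofReal r := by
        by_contra hc
        exact hmem (mem_of_le_radialFn hA hθ hr (not_lt.1 hc))
      rw [radialDist, if_neg hmem, hdir, hnorm, Dfun, min_eq_left hlt.le]

theorem radialDist_eq_dfun {A : Set (EuclideanSpace ℝ (Fin d))} (hA : IsStarBody A)
    {x : EuclideanSpace ℝ (Fin d)} (hx : x ≠ 0) :
    radialDist x A = Dfun (radialFn A (‖x‖⁻¹ • x)) ‖x‖ := by
  have h1 : ‖x‖ • (‖x‖⁻¹ • x) = x := smul_inv_smul₀ (norm_ne_zero_iff.2 hx) x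
  conv_lhs => rw [← h1]
  exact radialDist_smul hA (norm_smul_inv_norm hx) (norm_nonneg x)

theorem radialDist_nonneg {A : Set (EuclideanSpace ℝ (Fin d))} (hA : IsStarBody A)
    (x : EuclideanSpace ℝ (Fin d)) : 0 ≤ radialDist x A := by
  rcases eq_or_ne x 0 with rfl | hx
  · rw [radialDist_zero _ hA.1]
  · rw [radialDist_eq_dfun hA hx]
    exact Dfun_nonneg _ (norm_nonneg x)

theorem radialDist_le_norm (A : Set (EuclideanSpace ℝ (Fin d)))
    (x : EuclideanSpace ℝ (Fin d)) : radialDist x A ≤ ‖x‖ := by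
  rw [radialDist]
  split
  · exact norm_nonneg x
  · have : 0 ≤ (radialFn A (‖x‖⁻¹ • x)).toReal := ENNReal.toReal_nonneg
    linarith

theorem mem_iff_radialDist {A : Set (EuclideanSpace ℝ (Fin d))} (hA : IsStarBody A)
    (x : EuclideanSpace ℝ (Fin d)) : x ∈ A ↔ radialDist x A ≤ 0 := by
  constructor
  · intro h; rw [radialDist, if_pos h]
  · intro h
    by_contra hx
    rw [radialDist, if_neg hx] at h
    have hx0 : x ≠ 0 := fun h0 => hx (h0 ▸ starSet_zero_mem hA.1)
    have hθ : ‖‖x‖⁻¹ • x‖ = 1 := norm_smul_inv_norm hx0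
    have hle : ENNReal.ofReal ‖x‖ ≤ radialFn A (‖x‖⁻¹ • x) := by
      by_cases htop : radialFn A (‖x‖⁻¹ • x) = ⊤
      · rw [htop]; exact le_top
      · rw [ENNReal.ofReal_le_iff_le_toReal htop]; linarith
    have := mem_of_le_radialFn hA hθ (norm_nonneg x) hle
    rw [smul_inv_smul₀ (norm_ne_zero_iff.2 hx0)] at this
    exact hx this

/-- Inner supremum in the Attouch–Wets distance. -/
noncomputable def inn (A B : Set (EuclideanSpace ℝ (Fin d))) (j : ℕ) : ℝ :=
  ⨆ x : Metric.closedBall (0 : EuclideanSpace ℝ (Fin d)) ((j : ℝ) + 1),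
    |radialDist (x : EuclideanSpace ℝ (Fin d)) A -
      radialDist (x : EuclideanSpace ℝ (Fin d)) B|

theorem dAWr_eq (A B : Set (EuclideanSpace ℝ (Fin d))) :
    dAWr A B = ⨆ j : ℕ, min (1 / ((j : ℝ) + 1)) (inn A B j) := rfl

instance ballNonempty (j : ℕ) :
    Nonempty (Metric.closedBall (0 : EuclideanSpace ℝ (Fin d)) ((j : ℝ) + 1)) :=
  ⟨⟨0, Metric.mem_closedBall_self (by positivity)⟩⟩

theorem inn_bdd {A B : Set (EuclideanSpace ℝ (Fin d))} (hA : IsStarBody A) (hB : IsStarBody B)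
    (j : ℕ) : BddAbove (Set.range fun x : Metric.closedBall (0 : EuclideanSpace ℝ (Fin d)) ((j : ℝ) + 1) =>
      |radialDist (x : EuclideanSpace ℝ (Fin d)) A - radialDist (x : EuclideanSpace ℝ (Fin d)) B|) := by
  refine ⟨(j : ℝ) + 1, ?_⟩
  rintro y ⟨x, rfl⟩
  have hx : ‖(x : EuclideanSpace ℝ (Fin d))‖ ≤ (j : ℝ) + 1 := mem_closedBall_zero_iff.1 x.2
  have h1 := radialDist_nonneg hA (x : EuclideanSpace ℝ (Fin d))
  have h2 := radialDist_nonneg hB (x : EuclideanSpace ℝ (Fin d))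
  have h3 := radialDist_le_norm A (x : EuclideanSpace ℝ (Fin d))
  have h4 := radialDist_le_norm B (x : EuclideanSpace ℝ (Fin d))
  rw [abs_sub_le_iff]
  constructor <;> linarith

theorem le_inn {A B : Set (EuclideanSpace ℝ (Fin d))} (hA : IsStarBody A) (hB : IsStarBody B)
    {j : ℕ} {x : EuclideanSpace ℝ (Fin d)} (hx : ‖x‖ ≤ (j : ℝ) + 1) :
    |radialDist x A - radialDist x B| ≤ inn A B j :=
  le_ciSup (inn_bdd hA hB j) (⟨x, by simpa [mem_closedBall_zero_iff] using hx⟩ :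
    Metric.closedBall (0 : EuclideanSpace ℝ (Fin d)) ((j : ℝ) + 1))

theorem inn_le {A B : Set (EuclideanSpace ℝ (Fin d))} {j : ℕ} {c : ℝ}
    (h : ∀ x : EuclideanSpace ℝ (Fin d), ‖x‖ ≤ (j : ℝ) + 1 →
      |radialDist x A - radialDist x B| ≤ c) : inn A B j ≤ c :=
  ciSup_le fun x => h x (mem_closedBall_zero_iff.1 x.2)

theorem inn_nonneg {A B : Set (EuclideanSpace ℝ (Fin d))} (hA : IsStarBody A) (hB : IsStarBody B)
    (j : ℕ) : 0 ≤ inn A B j :=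
  (abs_nonneg _).trans (le_inn hA hB (x := 0) (by simp; positivity))

theorem dAWr_bdd (A B : Set (EuclideanSpace ℝ (Fin d))) :
    BddAbove (Set.range fun j : ℕ => min (1 / ((j : ℝ) + 1)) (inn A B j)) := by
  refine ⟨1, ?_⟩
  rintro y ⟨j, rfl⟩
  refine (min_le_left _ _).trans ?_
  rw [div_le_one (by positivity)]
  have : (0:ℝ) ≤ (j : ℝ) := Nat.cast_nonneg j
  linarith

theorem min_le_dAWr (A B : Set (EuclideanSpace ℝ (Fin d))) (j : ℕ) :
    min (1 / ((j : ℝ) + 1)) (inn A B j) ≤ dAWr A B := by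
  rw [dAWr_eq]
  exact le_ciSup (dAWr_bdd A B) j

theorem dAWr_le {A B : Set (EuclideanSpace ℝ (Fin d))} {c : ℝ}
    (h : ∀ j : ℕ, min (1 / ((j : ℝ) + 1)) (inn A B j) ≤ c) : dAWr A B ≤ c := by
  rw [dAWr_eq]
  exact ciSup_le h

theorem dAWr_nonneg {A B : Set (EuclideanSpace ℝ (Fin d))} (hA : IsStarBody A)
    (hB : IsStarBody B) : 0 ≤ dAWr A B :=
  (le_min (by norm_num) (inn_nonneg hA hB 0)).trans (min_le_dAWr A B 0)

theorem inn_lt {A B : Set (EuclideanSpace ℝ (Fin d))} {j : ℕ} {ε : ℝ}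
    (hε : ε ≤ 1 / ((j : ℝ) + 1)) (h : dAWr A B < ε) : inn A B j < ε := by
  by_contra h'
  have : ε ≤ min (1 / ((j : ℝ) + 1)) (inn A B j) := le_min hε (not_lt.1 h')
  linarith [this.trans (min_le_dAWr A B j)]

theorem min_add_aux {t x y : ℝ} (ht : 0 ≤ t) (hx : 0 ≤ x) (hy : 0 ≤ y) :
    min t (x + y) ≤ min t x + min t y := by
  rcases le_total x t with h1 | h1 <;> rcases le_total y t with h2 | h2
  · rw [min_eq_right h1, min_eq_right h2]; exact min_le_right _ _
  · rw [min_eq_right h1, min_eq_left h2]; exact (min_le_left _ _).trans (by linarith)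
  · rw [min_eq_left h1, min_eq_right h2]; exact (min_le_left _ _).trans (by linarith)
  · rw [min_eq_left h1, min_eq_left h2]; exact (min_le_left _ _).trans (by linarith)

end Aux2
section Main

open Filter Metric

variable {d : ℕ}

theorem dAWr_self {A : Set (EuclideanSpace ℝ (Fin d))} (hA : IsStarBody A) : dAWr A A = 0 := by
  refine le_antisymm (dAWr_le fun j => ?_) (dAWr_nonneg hA hA)
  refine (min_le_right _ _).trans (inn_le fun x _ => ?_)
  simp

theorem eq_of_dAWr_eq_zero {A B : Set (EuclideanSpace ℝ (Fin d))} (hA : IsStarBody A)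
    (hB : IsStarBody B) (h : dAWr A B = 0) : A = B := by
  have hkey : ∀ x : EuclideanSpace ℝ (Fin d), radialDist x A = radialDist x B := by
    intro x
    set j := ⌈‖x‖⌉₊ with hj
    have hx : ‖x‖ ≤ (j : ℝ) + 1 := (Nat.le_ceil _).trans (by linarith)
    have h1 : |radialDist x A - radialDist x B| ≤ inn A B j := le_inn hA hB hx
    have h2 : inn A B j ≤ 0 := by
      by_contra h2
      have h3 : (0:ℝ) < min (1 / ((j : ℝ) + 1)) (inn A B j) :=
        lt_min (by positivity) (not_le.1 h2)
      linarith [(min_le_dAWr A B j).trans_eq h]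
    have := h1.trans h2
    have := abs_nonneg (radialDist x A - radialDist x B)
    have : |radialDist x A - radialDist x B| = 0 := le_antisymm ‹_› ‹_›
    rw [abs_eq_zero, sub_eq_zero] at this
    exact this
  ext x
  rw [mem_iff_radialDist hA, mem_iff_radialDist hB, hkey x]

theorem dAWr_comm (A B : Set (EuclideanSpace ℝ (Fin d))) : dAWr A B = dAWr B A := by
  have hinn : ∀ j : ℕ, inn A B j = inn B A j := by
    intro j
    unfold inn
    exact congrArg iSup (funext fun x => abs_sub_comm
      (radialDist (x : EuclideanSpace ℝ (Fin d)) A) (radialDist (x : EuclideanSpace ℝ (Fin d)) B))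
  rw [dAWr_eq, dAWr_eq]
  exact congrArg iSup (funext fun j => by rw [hinn j])

theorem dAWr_triangle {A B C : Set (EuclideanSpace ℝ (Fin d))} (hA : IsStarBody A)
    (hB : IsStarBody B) (hC : IsStarBody C) : dAWr A C ≤ dAWr A B + dAWr B C := by
  refine dAWr_le fun j => ?_
  have h1 : inn A C j ≤ inn A B j + inn B C j := by
    refine inn_le fun x hx => ?_
    calc |radialDist x A - radialDist x C|
        ≤ |radialDist x A - radialDist x B| + |radialDist x B - radialDist x C| :=
          abs_sub_le _ _ _
      _ ≤ inn A B j + inn B C j := add_le_add (le_inn hA hB hx) (le_inn hB hC hx)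
  calc min (1 / ((j : ℝ) + 1)) (inn A C j)
      ≤ min (1 / ((j : ℝ) + 1)) (inn A B j + inn B C j) :=
        min_le_min le_rfl h1
    _ ≤ min (1 / ((j : ℝ) + 1)) (inn A B j) + min (1 / ((j : ℝ) + 1)) (inn B C j) :=
        min_add_aux (by positivity) (inn_nonneg hA hB j) (inn_nonneg hB hC j)
    _ ≤ dAWr A B + dAWr B C := add_le_add (min_le_dAWr A B j) (min_le_dAWr B C j)

end Main
section Complete

open Filter Metric

variable {d : ℕ}

theorem dAWr_complete (u : ℕ → Set (EuclideanSpace ℝ (Fin d))) (hu : ∀ n, IsStarBody (u n))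
    (hC : ∀ ε : ℝ, 0 < ε → ∃ N : ℕ, ∀ m ≥ N, ∀ n ≥ N, dAWr (u m) (u n) < ε) :
    ∃ B : Set (EuclideanSpace ℝ (Fin d)), IsStarBody B ∧
      Filter.Tendsto (fun n => dAWr (u n) B) Filter.atTop (nhds 0) := by
  -- Step A: pointwise Cauchy
  have cauchy : ∀ x : EuclideanSpace ℝ (Fin d), CauchySeq fun n => radialDist x (u n) := by
    intro x
    rw [Metric.cauchySeq_iff]
    intro ε hε
    set j := ⌈‖x‖⌉₊ with hj
    have hx : ‖x‖ ≤ (j : ℝ) + 1 := (Nat.le_ceil _).trans (by linarith)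
    have hδ : (0:ℝ) < min ε (1 / ((j : ℝ) + 1)) := lt_min hε (by positivity)
    obtain ⟨N, hN⟩ := hC _ hδ
    refine ⟨N, fun m hm n hn => ?_⟩
    have h1 : inn (u m) (u n) j < min ε (1 / ((j : ℝ) + 1)) :=
      inn_lt (min_le_right _ _) (hN m hm n hn)
    have h2 := le_inn (hu m) (hu n) hx
    rw [Real.dist_eq]
    exact lt_of_le_of_lt h2 (h1.trans_le (min_le_left _ _))
  choose f hf using fun x => cauchySeq_tendsto_of_complete (cauchy x)
  -- Step C: basic properties of f
  have hf0 : f 0 = 0 := by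
    have h0 : (fun n => radialDist (0 : EuclideanSpace ℝ (Fin d)) (u n)) = fun _ => (0:ℝ) :=
      funext fun n => radialDist_zero _ (hu n).1
    exact tendsto_nhds_unique (hf 0) (h0 ▸ tendsto_const_nhds)
  have hf_nonneg : ∀ x, 0 ≤ f x := fun x =>
    ge_of_tendsto' (hf x) fun n => radialDist_nonneg (hu n) x
  have key_mono : ∀ θ : EuclideanSpace ℝ (Fin d), ‖θ‖ = 1 → ∀ r s : ℝ, 0 ≤ r → r ≤ s →
      f (r • θ) ≤ f (s • θ) := by
    intro θ hθ r s hr hrs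
    refine le_of_tendsto_of_tendsto' (hf _) (hf _) fun n => ?_
    rw [radialDist_smul (hu n) hθ hr, radialDist_smul (hu n) hθ (hr.trans hrs)]
    exact Dfun_mono _ hr hrs
  have key_lip : ∀ θ : EuclideanSpace ℝ (Fin d), ‖θ‖ = 1 → ∀ r s : ℝ, 0 ≤ r → 0 ≤ s →
      |f (r • θ) - f (s • θ)| ≤ |r - s| := by
    intro θ hθ r s hr hs
    refine le_of_tendsto ((Filter.Tendsto.sub (hf _) (hf _)).abs) (.of_forall fun n => ?_)
    rw [radialDist_smul (hu n) hθ hr, radialDist_smul (hu n) hθ hs]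
    exact Dfun_lip _ hr hs
  have key_add : ∀ θ : EuclideanSpace ℝ (Fin d), ‖θ‖ = 1 → ∀ r s : ℝ, 0 ≤ s → s ≤ r →
      0 < f (s • θ) → f (r • θ) = f (s • θ) + (r - s) := by
    intro θ hθ r s hs hsr hpos
    have hev : ∀ᶠ n in atTop, 0 < radialDist (s • θ) (u n) :=
      (hf _).eventually (eventually_gt_nhds hpos)
    have heq : ∀ᶠ n in atTop,
        radialDist (s • θ) (u n) + (r - s) = radialDist (r • θ) (u n) := by
      filter_upwards [hev] with n hn
      rw [radialDist_smul (hu n) hθ (hs.trans hsr), radialDist_smul (hu n) hθ hs] at *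
      exact (Dfun_key _ hs hsr hn).symm
    exact tendsto_nhds_unique (hf (r • θ))
      (Filter.Tendsto.congr' heq ((hf (s • θ)).add tendsto_const_nhds))
  -- Step D: the limit body
  set B : Set (EuclideanSpace ℝ (Fin d)) := {x | f x ≤ 0} with hBdef
  have hmemB : ∀ x : EuclideanSpace ℝ (Fin d), x ∈ B ↔ f x ≤ 0 := fun x => Iff.rfl
  have hBstar : IsStarSet B := by
    constructor
    · exact ⟨0, by rw [hmemB, hf0]⟩
    · intro a ha t ht0 ht1
      rcases eq_or_ne a 0 with rfl | ha0
      · rw [smul_zero]; exact ha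
      · have hθ : ‖‖a‖⁻¹ • a‖ = 1 := norm_smul_inv_norm ha0
        have hna : ‖a‖ ≠ 0 := norm_ne_zero_iff.2 ha0
        have h1 : t • a = (t * ‖a‖) • (‖a‖⁻¹ • a) := by
          rw [smul_smul, mul_assoc, mul_inv_cancel₀ hna, mul_one]
        rw [hmemB, h1]
        have h2 : f ((t * ‖a‖) • (‖a‖⁻¹ • a)) ≤ f (‖a‖ • (‖a‖⁻¹ • a)) :=
          key_mono _ hθ _ _ (mul_nonneg ht0 (norm_nonneg a))
            (by nlinarith [norm_nonneg a])
        rw [smul_inv_smul₀ hna] at h2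
        exact h2.trans ha
  -- ray analysis
  have ray : ∀ θ : EuclideanSpace ℝ (Fin d), ‖θ‖ = 1 → radialFn B θ ≠ ⊤ →
      ∃ c : ℝ, 0 ≤ c ∧ radialFn B θ = ENNReal.ofReal c ∧ f (c • θ) ≤ 0 ∧
        ∀ r : ℝ, 0 ≤ r → f (r • θ) ≤ 0 → r ≤ c := by
    intro θ hθ hne
    set S : Set ℝ := {r : ℝ | 0 ≤ r ∧ r • θ ∈ B} with hS
    have hS0 : (0:ℝ) ∈ S := ⟨le_rfl, by rw [hmemB, zero_smul, hf0]⟩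
    have hSbdd : BddAbove S := by
      by_contra hbdd
      rw [not_bddAbove_iff] at hbdd
      obtain ⟨s, hsS, hs⟩ := hbdd (radialFn B θ).toReal
      have h1 : ENNReal.ofReal s ≤ radialFn B θ := le_sSup ⟨s, hsS, rfl⟩
      rw [ENNReal.ofReal_le_iff_le_toReal hne] at h1
      linarith
    set c := sSup S with hc
    have hc0 : 0 ≤ c := le_csSup hSbdd hS0
    have hfc : f (c • θ) ≤ 0 := by
      by_contra hfc
      push_neg at hfc
      obtain ⟨s, hsS, hslt⟩ := exists_lt_of_lt_csSup ⟨0, hS0⟩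
        (show c - f (c • θ) / 2 < sSup S by rw [← hc]; linarith)
      have hsc : s ≤ c := le_csSup hSbdd hsS
      have h1 : |f (c • θ) - f (s • θ)| ≤ |c - s| := key_lip θ hθ c s hc0 hsS.1
      have h2 : f (s • θ) ≤ 0 := hsS.2
      have h4 : |c - s| = c - s := abs_of_nonneg (by linarith)
      have h3 : f (c • θ) - f (s • θ) ≤ |f (c • θ) - f (s • θ)| := le_abs_self _
      linarith
    refine ⟨c, hc0, ?_, hfc, fun r hr hfr => le_csSup hSbdd ⟨hr, hfr⟩⟩
    refine le_antisymm (sSup_le ?_) (le_sSup ⟨c, ⟨hc0, hfc⟩, rfl⟩)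
    rintro y ⟨s, hsS, rfl⟩
    exact ENNReal.ofReal_le_ofReal (le_csSup hSbdd hsS)
  have hBbody : IsStarBody B := by
    refine ⟨hBstar, fun θ hθ hne => ?_⟩
    obtain ⟨c, hc0, hrad, hmem, _⟩ := ray θ hθ hne
    rw [hrad, ENNReal.toReal_ofReal hc0]
    exact hmem
  -- Step E: radialDist x B = f x
  have hdist : ∀ x : EuclideanSpace ℝ (Fin d), radialDist x B = f x := by
    intro x
    rcases eq_or_ne x 0 with rfl | hx0
    · rw [radialDist_zero _ hBstar, hf0]
    · have hθ : ‖‖x‖⁻¹ • x‖ = 1 := norm_smul_inv_norm hx0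
      have hnx : ‖x‖ ≠ 0 := norm_ne_zero_iff.2 hx0
      have hnx0 : (0:ℝ) < ‖x‖ := lt_of_le_of_ne (norm_nonneg x) (Ne.symm hnx)
      have hxθ : ‖x‖ • (‖x‖⁻¹ • x) = x := smul_inv_smul₀ hnx x
      rcases le_or_gt (f x) 0 with hfx | hfx
      · rw [radialDist, if_pos ((hmemB x).2 hfx)]
        exact (le_antisymm hfx (hf_nonneg x)).symm
      · have hxB : x ∉ B := by rw [hmemB]; linarith
        have hne : radialFn B (‖x‖⁻¹ • x) ≠ ⊤ := by
          intro htop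
          refine hxB ?_
          have := mem_of_le_radialFn hBbody hθ (norm_nonneg x) (htop ▸ le_top)
          rwa [hxθ] at this
        obtain ⟨c, hc0, hrad, hmemc, hub⟩ := ray _ hθ hne
        rw [radialDist, if_neg hxB, hrad, ENNReal.toReal_ofReal hc0]
        have hfc : f (c • (‖x‖⁻¹ • x)) = 0 := le_antisymm hmemc (hf_nonneg _)
        have hclt : c < ‖x‖ := by
          by_contra hcge
          have := key_mono _ hθ ‖x‖ c (norm_nonneg x) (not_lt.1 hcge)
          rw [hxθ] at this
          linarith
        -- upper bound : f x ≤ ‖x‖ - c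
        have hle : f x ≤ ‖x‖ - c := by
          have h1 := key_lip _ hθ ‖x‖ c (norm_nonneg x) hc0
          rw [hxθ, hfc, sub_zero, abs_of_pos hfx, abs_of_nonneg (by linarith)] at h1
          linarith
        -- lower bound
        have hge : ‖x‖ - c ≤ f x := by
          by_contra hlt
          push_neg at hlt
          set s : ℝ := ‖x‖ - f x with hsdef
          have hs0 : 0 ≤ s := by
            have := hle
            simp only [hsdef]
            linarith
          have hsx : s ≤ ‖x‖ := by simp only [hsdef]; linarith
          have hsc : c < s := by simp only [hsdef]; linarith
          have hfs : 0 < f (s • (‖x‖⁻¹ • x)) := by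
            rcases lt_or_ge 0 (f (s • (‖x‖⁻¹ • x))) with h | h
            · exact h
            · exact absurd (hub s hs0 h) (not_le.2 hsc)
          have := key_add _ hθ ‖x‖ s hs0 hsx hfs
          rw [hxθ] at this
          have : f (s • (‖x‖⁻¹ • x)) = 0 := by
            simp only [hsdef] at this ⊢
            linarith
          linarith
        linarith
  -- Step F: convergence
  refine ⟨B, hBbody, ?_⟩
  rw [Metric.tendsto_atTop]
  intro ε hε
  set j₀ := ⌈2/ε⌉₊ with hj₀def
  have hj₀ : 1 / ((j₀ : ℝ) + 1) ≤ ε / 2 := by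
    rw [div_le_iff₀ (by positivity)]
    have h1 : 2/ε ≤ (j₀ : ℝ) := Nat.le_ceil _
    calc (1:ℝ) = ε/2 * (2/ε) := by field_simp
      _ ≤ ε/2 * ((j₀:ℝ) + 1) := by
          apply mul_le_mul_of_nonneg_left (by linarith) (by positivity)
  set δ : ℝ := min (ε/2) (1 / ((j₀ : ℝ) + 1)) with hδdef
  have hδpos : 0 < δ := lt_min (by linarith) (by positivity)
  obtain ⟨N, hN⟩ := hC δ hδpos
  refine ⟨N, fun n hn => ?_⟩
  have hbound : ∀ x : EuclideanSpace ℝ (Fin d), ‖x‖ ≤ (j₀ : ℝ) + 1 →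
      |radialDist x (u n) - f x| ≤ δ := by
    intro x hx
    have htend : Filter.Tendsto (fun m => |radialDist x (u n) - radialDist x (u m)|) atTop
        (nhds |radialDist x (u n) - f x|) := (tendsto_const_nhds.sub (hf x)).abs
    refine le_of_tendsto htend (eventually_atTop.2 ⟨N, fun m hm => ?_⟩)
    have h1 : inn (u n) (u m) j₀ < δ := inn_lt (min_le_right _ _) (hN n hn m hm)
    exact (le_inn (hu n) (hu m) hx).trans h1.le
  have hfinal : dAWr (u n) B ≤ ε / 2 := by
    refine dAWr_le fun j => ?_
    rcases le_or_gt j j₀ with hj | hj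
    · refine (min_le_right _ _).trans ?_
      have hsub : inn (u n) B j ≤ δ := by
        refine inn_le fun x hx => ?_
        rw [hdist x]
        refine hbound x (hx.trans ?_)
        have : (j : ℝ) ≤ (j₀ : ℝ) := Nat.cast_le.2 hj
        linarith
      exact hsub.trans (min_le_left _ _)
    · refine (min_le_left _ _).trans ?_
      have h1 : 1 / ((j : ℝ) + 1) ≤ 1 / ((j₀ : ℝ) + 1) := by
        apply one_div_le_one_div_of_le (by positivity)
        have : (j₀ : ℝ) ≤ (j : ℝ) := Nat.cast_le.2 hj.le
        linarith
      linarith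
  rw [Real.dist_eq, sub_zero, abs_of_nonneg (dAWr_nonneg (hu n) hBbody)]
  linarith

end Complete

theorem dAWr_metric_complete {d : ℕ} :
    (∀ A B : Set (EuclideanSpace ℝ (Fin d)), IsStarBody A → IsStarBody B →
      (dAWr A B = 0 ↔ A = B)) ∧
    (∀ A B : Set (EuclideanSpace ℝ (Fin d)), dAWr A B = dAWr B A) ∧
    (∀ A B C : Set (EuclideanSpace ℝ (Fin d)), IsStarBody A → IsStarBody B →
      IsStarBody C → dAWr A C ≤ dAWr A B + dAWr B C) ∧
    (∀ u : ℕ → Set (EuclideanSpace ℝ (Fin d)), (∀ n, IsStarBody (u n)) →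
      (∀ ε : ℝ, 0 < ε → ∃ N : ℕ, ∀ m ≥ N, ∀ n ≥ N, dAWr (u m) (u n) < ε) →
      ∃ B : Set (EuclideanSpace ℝ (Fin d)), IsStarBody B ∧
        Filter.Tendsto (fun n => dAWr (u n) B) Filter.atTop (nhds 0)) := by
  refine ⟨fun A B hA hB => ⟨fun h => eq_of_dAWr_eq_zero hA hB h, fun h => h ▸ dAWr_self hA⟩,
    dAWr_comm, fun A B C hA hB hC => dAWr_triangle hA hB hC, dAWr_complete⟩
end
end
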